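/- Under Assumptions B, let u : [0,∞) → H be the continuously differentiable function with u(t) ∈ B(y, R) and F(u(t)) = h + e^{−t}·v₀ for all t ≥ 0. Then u(t) converges to a limit u(∞) ∈ H as t → ∞, and ‖u(∞) − u(t)‖ ≤ (m·r/(1−q))·e^{−t} for all t ≥ 0. -/

import Mathlib

open Metric Set Filter

theorem stmt_8
    {H : Type*} [NormedAddCommGroup H] [InnerProductSpace ℝ H] [CompleteSpace H]
    (F : H → H) (F' : H → H →L[ℝ] H) (y f : H) (R m q : ℝ)
    (hf : F y = f) (hR : 0 < R)
    (hdiff : ∀ u ∈ closedBall y R, HasFDerivAt F (F' u) u)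
    (Q : H →L[ℝ] H)
    (hQl : Q.comp (F' y) = ContinuousLinearMap.id ℝ H)
    (hQr : (F' y).comp Q = ContinuousLinearMap.id ℝ H)
    (hm : 0 < m) (hQm : ‖Q‖ ≤ m)
    (ω : ℝ → ℝ)
    (hωcont : ContinuousOn ω (Icc 0 (2 * R)))
    (hωmono : StrictMonoOn ω (Icc 0 (2 * R)))
    (hω0 : ω 0 = 0)
    (hωF : ∀ u ∈ closedBall y R, ∀ v ∈ closedBall y R, ‖F' u - F' v‖ ≤ ω ‖u - v‖)
    (hq : m * ω R = q) (hq0 : 0 < q) (hq1 : q < 1)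
    (ρ : ℝ) (hρ : ρ = (1 - q) * R / m)
    (u₀ h : H) (v₀ : H) (hv₀ : v₀ = F u₀ - h)
    (r δ : ℝ) (hr : r = ‖v₀‖) (hδ : ‖h - f‖ ≤ δ) (hδr : δ + r ≤ ρ)
    (u : ℝ → H)
    (hu : ∀ t : ℝ, 0 ≤ t → u t ∈ closedBall y R ∧ F (u t) = h + Real.exp (-t) • v₀)
    (u' : ℝ → H)
    (huderiv : ∀ t ∈ Ici (0:ℝ), HasDerivWithinAt u (u' t) (Ici 0) t)
    (hu'cont : ContinuousOn u' (Ici 0)) :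
    ∃ L : H, Tendsto u atTop (nhds L) ∧
      ∀ t : ℝ, 0 ≤ t → ‖L - u t‖ ≤ m * r / (1 - q) * Real.exp (-t) := by
  have h1q : (0:ℝ) < 1 - q := by linarith
  have hr0 : 0 ≤ r := hr ▸ norm_nonneg _
  set C : ℝ := m * r / (1 - q) with hC
  have hC0 : 0 ≤ C := by positivity
  -- Step 1: derivative identity F'(u t) (u' t) = -e^{-t} • v₀
  have hAw : ∀ t : ℝ, 0 ≤ t → (F' (u t)) (u' t) = (-Real.exp (-t)) • v₀ := by
    intro t ht
    have hmem := (hu t ht).1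
    have hchain : HasDerivWithinAt (fun τ => F (u τ)) ((F' (u t)) (u' t)) (Ici 0) t :=
      (hdiff (u t) hmem).comp_hasDerivWithinAt t (huderiv t ht)
    have hchain' : HasDerivWithinAt (fun τ : ℝ => h + Real.exp (-τ) • v₀)
        ((F' (u t)) (u' t)) (Ici 0) t :=
      hchain.congr (fun τ hτ => ((hu τ hτ).2).symm) ((hu t ht).2).symm
    have hrhs : HasDerivWithinAt (fun τ : ℝ => h + Real.exp (-τ) • v₀)
        ((-Real.exp (-t)) • v₀) (Ici 0) t := by
      have hexp : HasDerivAt (fun τ : ℝ => Real.exp (-τ)) (-Real.exp (-t)) t := by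
        simpa [Function.comp_def] using (Real.hasDerivAt_exp (-t)).comp t (hasDerivAt_neg t)
      exact ((hexp.smul_const v₀).const_add h).hasDerivWithinAt
    have huniq := (uniqueDiffOn_Ici (0:ℝ) t ht).eq hchain'.hasFDerivWithinAt hrhs.hasFDerivWithinAt
    have := congrArg (fun L : ℝ →L[ℝ] H => L 1) huniq
    simpa using this
  -- Step 2: ‖u' t‖ ≤ C e^{-t}
  have hnorm : ∀ t : ℝ, 0 ≤ t → ‖u' t‖ ≤ C * Real.exp (-t) := by
    intro t ht
    have hmem := (hu t ht).1
    set w := u' t with hw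
    have hdR : ‖u t - y‖ ≤ R := by
      simpa [dist_eq_norm] using hmem
    have hω_le : ω ‖u t - y‖ ≤ ω R := by
      rcases eq_or_lt_of_le hdR with he | hlt
      · rw [he]
      · exact le_of_lt (hωmono ⟨norm_nonneg _, by linarith⟩ ⟨by linarith, by linarith⟩ hlt)
    have hQapp : Q ((F' y) w) = w := by
      have := congrArg (fun L : H →L[ℝ] H => L w) hQl
      simpa using this
    have hsplit : w = Q ((F' (u t)) w) - Q ((F' (u t) - F' y) w) := by
      rw [ContinuousLinearMap.sub_apply, map_sub, hQapp]
      abel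
    have hb1 : ‖Q ((F' (u t)) w)‖ ≤ m * ‖(F' (u t)) w‖ :=
      le_trans (Q.le_opNorm _) (mul_le_mul_of_nonneg_right hQm (norm_nonneg _))
    have hb2 : ‖Q ((F' (u t) - F' y) w)‖ ≤ q * ‖w‖ := by
      calc ‖Q ((F' (u t) - F' y) w)‖ ≤ ‖Q‖ * ‖(F' (u t) - F' y) w‖ := Q.le_opNorm _
        _ ≤ m * (‖F' (u t) - F' y‖ * ‖w‖) := by
            gcongr
            exact (F' (u t) - F' y).le_opNorm _
        _ ≤ m * (ω R * ‖w‖) := by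
            gcongr
            exact le_trans (hωF (u t) hmem y (mem_closedBall_self hR.le)) hω_le
        _ = q * ‖w‖ := by rw [← hq]; ring
    have key : ‖w‖ ≤ m * ‖(F' (u t)) w‖ + q * ‖w‖ := by
      calc ‖w‖ = ‖Q ((F' (u t)) w) - Q ((F' (u t) - F' y) w)‖ := by rw [← hsplit]
        _ ≤ ‖Q ((F' (u t)) w)‖ + ‖Q ((F' (u t) - F' y) w)‖ := norm_sub_le _ _
        _ ≤ m * ‖(F' (u t)) w‖ + q * ‖w‖ := add_le_add hb1 hb2
    have hAwn : ‖(F' (u t)) w‖ = Real.exp (-t) * r := by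
      rw [hAw t ht, norm_smul, hr]
      simp [abs_of_pos (Real.exp_pos (-t))]
    rw [hAwn] at key
    rw [hC, div_mul_eq_mul_div, le_div_iff₀ h1q]
    nlinarith [norm_nonneg w]
  -- Step 3: Cauchy estimate
  have hbound : ∀ t s : ℝ, 0 ≤ t → t ≤ s → ‖u s - u t‖ ≤ C * Real.exp (-t) := by
    intro t s ht hts
    have hsub : Icc t s ⊆ Ici (0:ℝ) := fun x hx => le_trans ht hx.1
    have hcont : ContinuousOn u (Icc t s) :=
      fun x hx => ((huderiv x (hsub hx)).continuousWithinAt).mono hsub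
    have hderivIcc : ∀ x ∈ Ioo t s, HasDerivWithinAt u (u' x) (Ioi x) x := fun x hx =>
      (huderiv x (le_trans ht hx.1.le)).mono (fun z hz => le_trans (le_trans ht hx.1.le) hz.le)
    have hint : IntervalIntegrable u' MeasureTheory.volume t s :=
      (hu'cont.mono (by rw [uIcc_of_le hts]; exact hsub)).intervalIntegrable
    have hftc : ∫ τ in t..s, u' τ = u s - u t :=
      intervalIntegral.integral_eq_sub_of_hasDeriv_right_of_le hts hcont hderivIcc hint
    have hintexp : ∫ τ in t..s, C * Real.exp (-τ) =
        C * (Real.exp (-t) - Real.exp (-s)) := by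
      rw [intervalIntegral.integral_const_mul]
      have : ∫ τ in t..s, Real.exp (-τ) = Real.exp (-t) - Real.exp (-s) := by
        have hd : ∀ x ∈ uIcc t s, HasDerivAt (fun τ : ℝ => -Real.exp (-τ)) (Real.exp (-x)) x := by
          intro x _
          have : HasDerivAt (fun τ : ℝ => Real.exp (-τ)) (-Real.exp (-x)) x := by
            simpa [Function.comp_def] using (Real.hasDerivAt_exp (-x)).comp x (hasDerivAt_neg x)
          simpa [Pi.neg_def] using this.neg
        have hce : Continuous (fun τ : ℝ => Real.exp (-τ)) := Real.continuous_exp.comp continuous_neg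
        have := intervalIntegral.integral_eq_sub_of_hasDerivAt hd
          (hce.continuousOn.intervalIntegrable)
        rw [this]; ring
      rw [this]
    have hce : Continuous (fun τ : ℝ => Real.exp (-τ)) := Real.continuous_exp.comp continuous_neg
    have hle : ‖∫ τ in t..s, u' τ‖ ≤ C * (Real.exp (-t) - Real.exp (-s)) := by
      have habs : ‖∫ τ in t..s, u' τ‖ ≤ |∫ τ in t..s, C * Real.exp (-τ)| := by
        apply intervalIntegral.norm_integral_le_abs_of_norm_le _
          ((hce.continuousOn.intervalIntegrable (a := t) (b := s)).const_mul C)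
        filter_upwards [MeasureTheory.ae_restrict_mem measurableSet_Ioc] with x hx
        rw [uIoc_of_le hts] at hx
        exact hnorm x (le_trans ht hx.1.le)
      rw [hintexp, abs_of_nonneg] at habs
      · exact habs
      · have : Real.exp (-s) ≤ Real.exp (-t) := Real.exp_le_exp.mpr (by linarith)
        nlinarith
    calc ‖u s - u t‖ = ‖∫ τ in t..s, u' τ‖ := by rw [hftc]
      _ ≤ C * (Real.exp (-t) - Real.exp (-s)) := hle
      _ ≤ C * Real.exp (-t) := by nlinarith [Real.exp_pos (-s)]
  -- Step 4: Cauchy ⇒ limit exists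
  have htend0 : Tendsto (fun t : ℝ => C * Real.exp (-t)) atTop (nhds 0) := by
    simpa using (Real.tendsto_exp_neg_atTop_nhds_zero.const_mul C)
  have hcauchy : CauchySeq u := by
    rw [Metric.cauchySeq_iff']
    intro ε hε
    have hev : ∀ᶠ t : ℝ in atTop, C * Real.exp (-t) < ε ∧ 0 ≤ t :=
      (htend0.eventually (gt_mem_nhds hε)).and (eventually_ge_atTop 0)
    obtain ⟨N, hN⟩ := hev.exists
    exact ⟨N, fun n hn => by
      rw [dist_eq_norm]
      exact lt_of_le_of_lt (hbound N n hN.2 hn) hN.1⟩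
  obtain ⟨L, hL⟩ := cauchySeq_tendsto_of_complete hcauchy
  refine ⟨L, hL, fun t ht => ?_⟩
  have h1 : Tendsto (fun s => ‖u s - u t‖) atTop (nhds ‖L - u t‖) :=
    ((hL.sub_const (u t)).norm)
  exact le_of_tendsto h1 ((eventually_ge_atTop t).mono fun s hs => hbound t s ht hs)
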